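/- Let K be an odd positive integer, ε ≥ 0, and let m be an integer with 1 ≤ m ≤ (K−1)/2. Define h(l) = (1/C(K,2m−1)) · Σ_{i=m}^{2m−1} C(l,i)·C(K−l, 2m−1−i) for l ∈ {0,…,K}, and define γ(l) = 1 − 2h(l) for l ≤ (K−1)/2 and γ(l) = 2h(l) − 1 for l ≥ (K+1)/2. Then for every (p, p') ∈ F(ε,0): Σ_{l=0}^{(K−1)/2} ( e^{mε} b(l;K,p') − b(l;K,p) ) γ(l) + Σ_{l=(K+1)/2}^{K} ( b(l;K,p) − e^{mε} b(l;K,p') ) γ(l) ≤ e^{mε} − 1. (Hence DaRRM with this γ, which is equivalent to outputting the majority of 2m−1 outcomes subsampled without replacement from K i.i.d. (ε,0)-differentially-private mechanisms, is mε-differentially private — a privacy amplification by a factor of 2 over subsampling m mechanisms.) -/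

import Mathlib

open Finset

/-- Binomial(K,p) probability mass at `l`. -/
noncomputable def binomPMF (K : ℕ) (p : ℝ) (l : ℕ) : ℝ :=
  (K.choose l : ℝ) * p ^ l * (1 - p) ^ (K - l)

/-- The feasible region `F(ε,0)`: pairs `(p,p') ∈ [0,1]²` consistent with pure
`ε`-differential privacy. -/
def Feas0 (ε p p' : ℝ) : Prop :=
  0 ≤ p ∧ p ≤ 1 ∧ 0 ≤ p' ∧ p' ≤ 1 ∧
  p ≤ Real.exp ε * p' ∧ p' ≤ Real.exp ε * p ∧
  1 - p ≤ Real.exp ε * (1 - p') ∧ 1 - p' ≤ Real.exp ε * (1 - p)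

/-! ### Auxiliary machinery -/

private lemma choose_prod_aux (Kk n i j : ℕ) (hi : i ≤ n) (hn : n ≤ Kk) (hj : j ≤ Kk - n) :
    ((Kk.choose (i+j) : ℝ) * ((i+j).choose i : ℝ) * ((Kk-(i+j)).choose (n-i) : ℝ))
      = (Kk.choose n : ℝ) * (n.choose i : ℝ) * ((Kk-n).choose j : ℝ) := by
  have h1 : i + j ≤ Kk := by omega
  have h2 : i ≤ i + j := by omega
  have h3 : n - i ≤ Kk - (i+j) := by omega
  rw [Nat.cast_choose ℝ h1, Nat.cast_choose ℝ h2, Nat.cast_choose ℝ h3,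
    Nat.cast_choose ℝ hn, Nat.cast_choose ℝ hi, Nat.cast_choose ℝ hj]
  have e1 : i + j - i = j := by omega
  have e2 : Kk - (i+j) - (n-i) = Kk - n - j := by omega
  rw [e1, e2]
  have f0 : ∀ a : ℕ, (a.factorial : ℝ) ≠ 0 := fun a => Nat.cast_ne_zero.mpr a.factorial_ne_zero
  field_simp

private lemma vdm_inner (Kk n i : ℕ) (hi : i ≤ n) (hn : n ≤ Kk) (p : ℝ) :
    ∑ l ∈ range (Kk+1),
      (Kk.choose l : ℝ) * p^l * (1-p)^(Kk-l) * ((l.choose i : ℝ) * ((Kk-l).choose (n-i) : ℝ))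
      = (Kk.choose n : ℝ) * ((n.choose i : ℝ) * (p^i * (1-p)^(n-i))) := by
  have hsub : Icc i (Kk - n + i) ⊆ range (Kk+1) := by
    intro l hl; simp only [mem_Icc] at hl; simp only [mem_range]; omega
  have hvan : ∀ l ∈ range (Kk+1), l ∉ Icc i (Kk - n + i) →
      (Kk.choose l : ℝ) * p^l * (1-p)^(Kk-l) * ((l.choose i : ℝ) * ((Kk-l).choose (n-i) : ℝ)) = 0 := by
    intro l hl hl'
    simp only [mem_range] at hl
    simp only [mem_Icc, not_and_or, not_le] at hl'
    rcases hl' with h' | h'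
    · rw [Nat.choose_eq_zero_of_lt h']; simp
    · have hlt : Kk - l < n - i := by omega
      rw [Nat.choose_eq_zero_of_lt hlt]; simp
  rw [← Finset.sum_subset hsub hvan, ← Finset.Ico_add_one_right_eq_Icc, Finset.sum_Ico_eq_sum_range]
  have hKn : Kk - n + i + 1 - i = Kk - n + 1 := by omega
  rw [hKn]
  have hterm : ∀ j ∈ range (Kk - n + 1),
      (Kk.choose (i+j) : ℝ) * p^(i+j) * (1-p)^(Kk-(i+j)) * (((i+j).choose i : ℝ) * ((Kk-(i+j)).choose (n-i) : ℝ))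
      = ((Kk.choose n : ℝ) * ((n.choose i : ℝ) * (p^i * (1-p)^(n-i)))) * (p^j * (1-p)^(Kk-n-j) * ((Kk-n).choose j : ℝ)) := by
    intro j hj
    simp only [mem_range] at hj
    have hj' : j ≤ Kk - n := by omega
    have hc := choose_prod_aux Kk n i j hi hn hj'
    have hp : p^(i+j) = p^i * p^j := pow_add p i j
    have hq : (1-p)^(Kk-(i+j)) = (1-p)^(n-i) * (1-p)^(Kk-n-j) := by
      rw [← pow_add]; congr 1; omega
    rw [hp, hq]
    linear_combination (p^i * p^j * ((1-p)^(n-i) * (1-p)^(Kk-n-j))) * hc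
  rw [Finset.sum_congr rfl hterm, ← Finset.mul_sum]
  have hone : ∑ j ∈ range (Kk - n + 1), p^j * (1-p)^(Kk-n-j) * ((Kk-n).choose j : ℝ) = 1 := by
    rw [← add_pow]
    norm_num
  rw [hone, mul_one]

/-- Tail of the Binomial(n, q) distribution from `m` upward, as a function of `q`. -/
noncomputable def ggAux (n m : ℕ) (q : ℝ) : ℝ :=
  ∑ i ∈ Icc m n, (n.choose i : ℝ) * (q^i * (1-q)^(n-i))

private lemma gg_hasDerivAt (n m : ℕ) (hm : 1 ≤ m) (hmn : m ≤ n) (q : ℝ) :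
    HasDerivAt (ggAux n m)
      (((n * (n-1).choose (m-1) : ℕ) : ℝ) * (q^(m-1) * (1-q)^(n-m))) q := by
  set v : ℕ → ℝ := fun i => ((n * (n-1).choose (i-1) : ℕ) : ℝ) * (q^(i-1) * (1-q)^(n-i)) with hv
  have hterm : ∀ i ∈ Icc m n,
      HasDerivAt (fun x : ℝ => (n.choose i : ℝ) * (x^i * (1-x)^(n-i))) (v i - v (i+1)) q := by
    intro i hi
    simp only [mem_Icc] at hi
    have hi1 : 1 ≤ i := le_trans hm hi.1
    have h1 : HasDerivAt (fun x : ℝ => x^i) ((i:ℝ) * q^(i-1)) q := hasDerivAt_pow i q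
    have hinner : HasDerivAt (fun x : ℝ => 1 - x) (-1) q := (hasDerivAt_id q).const_sub 1
    have h2 : HasDerivAt (fun x : ℝ => (1-x)^(n-i))
        ((((n-i : ℕ):ℝ) * (1-q)^(n-i-1)) * (-1)) q :=
      (hasDerivAt_pow (n-i) (1-q)).comp q hinner
    have h3 := (h1.fun_mul h2).const_mul ((n.choose i : ℝ))
    refine h3.congr_deriv ?_
    have hA : (n * (n-1).choose (i-1) : ℕ) = n.choose i * i := by
      have h := Nat.add_one_mul_choose_eq (n-1) (i-1)
      have en : (n-1)+1 = n := by omega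
      have ei : (i-1)+1 = i := by omega
      rwa [en, ei] at h
    have hB : (n * (n-1).choose i : ℕ) = n.choose i * (n-i) := by
      rcases eq_or_lt_of_le hi.2 with rfl | hlt
      · have h0 : (i-1).choose i = 0 := Nat.choose_eq_zero_of_lt (by omega)
        simp [h0]
      · have h := Nat.add_one_mul_choose_eq (n-1) (n-i-1)
        have en : (n-1)+1 = n := by omega
        have ei : (n-i-1)+1 = n-i := by omega
        rw [en, ei] at h
        have hs1 : (n-1).choose (n-i-1) = (n-1).choose i := by
          have h' := Nat.choose_symm (show i ≤ n-1 by omega)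
          have e : n - 1 - i = n - i - 1 := by omega
          rw [e] at h'
          exact h'
        have hs2 : n.choose (n-i) = n.choose i := Nat.choose_symm hi.2
        rw [hs1, hs2] at h
        exact h
    simp only [hv]
    have e2 : n - (i+1) = n - i - 1 := by omega
    have e1 : i + 1 - 1 = i := by omega
    rw [e1, e2]
    have hA' : ((n * (n-1).choose (i-1) : ℕ) : ℝ) = (n.choose i : ℝ) * (i:ℝ) := by
      exact_mod_cast congrArg (Nat.cast : ℕ → ℝ) hA
    have hB' : ((n * (n-1).choose i : ℕ) : ℝ) = (n.choose i : ℝ) * ((n-i : ℕ):ℝ) := by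
      exact_mod_cast congrArg (Nat.cast : ℕ → ℝ) hB
    rw [hA', hB']
    ring
  have hsum := HasDerivAt.fun_sum hterm
  have htel : ∑ i ∈ Icc m n, (v i - v (i+1)) = v m := by
    rw [← Finset.Ico_add_one_right_eq_Icc, Finset.sum_Ico_eq_sum_range]
    rw [Finset.sum_congr rfl (fun j hj => by rw [show m + j + 1 = m + (j+1) by omega])]
    rw [Finset.sum_range_sub' (fun j => v (m+j)) (n+1-m)]
    have e3 : m + (n+1-m) = n+1 := by omega
    rw [add_zero, e3]
    have h0 : (n-1).choose n = 0 := Nat.choose_eq_zero_of_lt (by omega)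
    have hvz : v (n+1) = 0 := by simp [hv, h0]
    rw [hvz, sub_zero]
  rw [htel] at hsum
  exact hsum

private lemma gg_zero (n m : ℕ) (hm : 1 ≤ m) : ggAux n m 0 = 0 := by
  apply Finset.sum_eq_zero
  intro i hi
  simp only [mem_Icc] at hi
  rw [zero_pow (show i ≠ 0 by omega)]
  ring

private lemma gg_nonneg (n m : ℕ) (q : ℝ) (h0 : 0 ≤ q) (h1 : q ≤ 1) : 0 ≤ ggAux n m q := by
  apply Finset.sum_nonneg
  intro i _
  have : (0:ℝ) ≤ 1 - q := by linarith
  positivity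

private lemma gg_eq_integral (n m : ℕ) (hm : 1 ≤ m) (hmn : m ≤ n) (p : ℝ) :
    ggAux n m p = ∫ t in (0:ℝ)..p,
      ((n * (n-1).choose (m-1) : ℕ) : ℝ) * (t^(m-1) * (1-t)^(n-m)) := by
  have hcont : Continuous fun t : ℝ =>
      ((n * (n-1).choose (m-1) : ℕ) : ℝ) * (t^(m-1) * (1-t)^(n-m)) := by continuity
  rw [intervalIntegral.integral_eq_sub_of_hasDerivAt
      (fun x _ => gg_hasDerivAt n m hm hmn x) (hcont.intervalIntegrable 0 p)]
  rw [gg_zero n m hm, sub_zero]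

private lemma gg_key (m : ℕ) (hm : 1 ≤ m) (ε p p' : ℝ) (hε : 0 ≤ ε)
    (hp0 : 0 ≤ p) (hp1 : p ≤ 1) (hp'0 : 0 ≤ p') (hp'1 : p' ≤ 1)
    (hpe : p ≤ Real.exp ε * p') :
    ggAux (2*m-1) m p ≤ Real.exp ((m:ℝ) * ε) * ggAux (2*m-1) m p' := by
  set n := 2*m-1 with hn
  have hmn : m ≤ n := by omega
  have hnm : n - m = m - 1 := by omega
  set c : ℝ := ((n * (n-1).choose (m-1) : ℕ) : ℝ) with hc
  have hc0 : 0 ≤ c := by positivity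
  set f : ℝ → ℝ := fun t => t^(m-1) * (1-t)^(m-1) with hf
  have hfc : Continuous f := by fun_prop
  have hfnn : ∀ x ∈ Set.Icc (0:ℝ) 1, 0 ≤ f x := by
    intro x hx
    have h1 : (0:ℝ) ≤ 1 - x := by linarith [hx.2]
    have h0 : (0:ℝ) ≤ x := hx.1
    positivity
  have hgg : ∀ x : ℝ, ggAux n m x = c * ∫ t in (0:ℝ)..x, f t := by
    intro x
    rw [gg_eq_integral n m hm hmn x, hnm, intervalIntegral.integral_const_mul]
  have hE1 : 1 ≤ Real.exp ((m:ℝ) * ε) := Real.one_le_exp (by positivity)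
  have hggnn' : 0 ≤ ggAux n m p' := gg_nonneg n m p' hp'0 hp'1
  by_cases hpp : p ≤ p'
  · have hmono : ggAux n m p ≤ ggAux n m p' := by
      rw [hgg p, hgg p']
      apply mul_le_mul_of_nonneg_left _ hc0
      have hsplit : (∫ t in (0:ℝ)..p, f t) + (∫ t in p..p', f t) = ∫ t in (0:ℝ)..p', f t :=
        intervalIntegral.integral_add_adjacent_intervals
          (hfc.intervalIntegrable 0 p) (hfc.intervalIntegrable p p')
      have hnn : 0 ≤ ∫ t in p..p', f t := by
        apply intervalIntegral.integral_nonneg hpp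
        intro x hx
        exact hfnn x ⟨le_trans hp0 hx.1, le_trans hx.2 hp'1⟩
      linarith
    nlinarith
  · push_neg at hpp
    have hp'pos : 0 < p' := by
      by_contra hcon
      push_neg at hcon
      have : Real.exp ε * p' ≤ 0 :=
        mul_nonpos_of_nonneg_of_nonpos (Real.exp_pos ε).le hcon
      linarith
    set β : ℝ := p / p' with hβ
    have hβ0 : 0 < β := div_pos (lt_trans hp'pos hpp) hp'pos
    have hβ1 : 1 ≤ β := (one_le_div hp'pos).mpr hpp.le
    have hβp : β * p' = p := div_mul_cancel₀ p hp'pos.ne'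
    have hβe : β ≤ Real.exp ε := (div_le_iff₀ hp'pos).mpr hpe
    have hsub : ∫ t in (0:ℝ)..p, f t = β * ∫ s in (0:ℝ)..p', f (β * s) := by
      rw [intervalIntegral.integral_comp_mul_left f hβ0.ne']
      rw [mul_zero, hβp, smul_eq_mul, ← mul_assoc, mul_inv_cancel₀ hβ0.ne', one_mul]
    have hcomp : ∫ s in (0:ℝ)..p', f (β * s) ≤ β^(m-1) * ∫ s in (0:ℝ)..p', f s := by
      rw [← intervalIntegral.integral_const_mul]
      apply intervalIntegral.integral_mono_on hp'0
      · exact ((hfc.comp (continuous_const.mul continuous_id)).intervalIntegrable 0 p')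
      · exact ((continuous_const.mul hfc).intervalIntegrable 0 p')
      · intro s hs
        have hs0 : 0 ≤ s := hs.1
        have hsp' : s ≤ p' := hs.2
        have hβs1 : β * s ≤ 1 := by
          have : β * s ≤ β * p' := mul_le_mul_of_nonneg_left hsp' hβ0.le
          rw [hβp] at this
          linarith
        have hβs0 : 0 ≤ β * s := mul_nonneg hβ0.le hs0
        have h1 : (1 - β*s) ≤ (1 - s) := by nlinarith
        have h2 : (1 - β*s)^(m-1) ≤ (1 - s)^(m-1) :=
          pow_le_pow_left₀ (by linarith) h1 (m-1)
        have hrw : f (β * s) = β^(m-1) * (s^(m-1) * (1-β*s)^(m-1)) := by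
          simp only [hf, mul_pow]
          ring
        rw [hrw]
        simp only [hf]
        have hs' : 0 ≤ s^(m-1) := pow_nonneg hs0 _
        have hβ' : 0 ≤ β^(m-1) := pow_nonneg hβ0.le _
        apply mul_le_mul_of_nonneg_left _ hβ'
        exact mul_le_mul_of_nonneg_left h2 hs'
    have hβm : β * β^(m-1) = β^m := by
      rw [← pow_succ']
      congr 1
      omega
    have hchain : ggAux n m p ≤ β^m * ggAux n m p' := by
      rw [hgg p, hgg p', hsub]
      calc c * (β * ∫ s in (0:ℝ)..p', f (β * s))
          ≤ c * (β * (β^(m-1) * ∫ s in (0:ℝ)..p', f s)) := by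
            apply mul_le_mul_of_nonneg_left _ hc0
            apply mul_le_mul_of_nonneg_left hcomp hβ0.le
        _ = β^m * (c * ∫ s in (0:ℝ)..p', f s) := by rw [← mul_assoc β, hβm]; ring
    have hβme : β^m ≤ Real.exp ((m:ℝ) * ε) := by
      rw [show ((m:ℝ) * ε) = (m:ℕ) * ε by norm_num, Real.exp_nat_mul]
      exact pow_le_pow_left₀ hβ0.le hβe m
    calc ggAux n m p ≤ β^m * ggAux n m p' := hchain
      _ ≤ Real.exp ((m:ℝ) * ε) * ggAux n m p' :=
          mul_le_mul_of_nonneg_right hβme hggnn'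

private lemma binom_sum (K : ℕ) (p : ℝ) : ∑ l ∈ range (K+1), binomPMF K p l = 1 := by
  have h := add_pow p (1-p) K
  have e : p + (1-p) = 1 := by ring
  rw [e, one_pow] at h
  have h2 : ∑ l ∈ range (K+1), binomPMF K p l
      = ∑ l ∈ range (K+1), p^l * (1-p)^(K-l) * (K.choose l : ℝ) :=
    Finset.sum_congr rfl (fun l _ => by rw [binomPMF]; ring)
  rw [h2, ← h]

/-- privacy amplification by 2 for small privacy allowance
`1 ≤ m ≤ (K−1)/2`: with `γ` corresponding to the majority of `2m−1` subsampled
mechanisms, the i.i.d. privacy cost objective is bounded by `e^{mε} − 1` on all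
of `F(ε,0)`, so DaRRM_γ is `mε`-differentially private. -/
theorem statement4 (K m : ℕ) (hK : Odd K) (hKpos : 0 < K)
    (hm1 : 1 ≤ m) (hmK : m ≤ (K - 1) / 2) (ε : ℝ) (hε : 0 ≤ ε)
    (h γ : ℕ → ℝ)
    (hh : ∀ l, h l = (∑ i ∈ Finset.Icc m (2 * m - 1),
        (l.choose i : ℝ) * ((K - l).choose (2 * m - 1 - i) : ℝ))
        / (K.choose (2 * m - 1) : ℝ))
    (hγlo : ∀ l, l ≤ (K - 1) / 2 → γ l = 1 - 2 * h l)
    (hγhi : ∀ l, (K + 1) / 2 ≤ l → γ l = 2 * h l - 1) :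
    ∀ p p' : ℝ, Feas0 ε p p' →
      (∑ l ∈ Finset.range ((K + 1) / 2),
          (Real.exp ((m : ℝ) * ε) * binomPMF K p' l - binomPMF K p l) * γ l)
        + (∑ l ∈ Finset.Icc ((K + 1) / 2) K,
          (binomPMF K p l - Real.exp ((m : ℝ) * ε) * binomPMF K p' l) * γ l)
        ≤ Real.exp ((m : ℝ) * ε) - 1 := by
  intro p p' hF
  obtain ⟨hp0, hp1, hp'0, hp'1, hpe, _, _, _⟩ := hF
  obtain ⟨k, hk⟩ := hK
  set n := 2*m-1 with hn
  have hnK : n ≤ K := by omega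
  set E := Real.exp ((m:ℝ)*ε) with hE
  have hcKn : ((K.choose n : ℕ):ℝ) ≠ 0 := by
    exact_mod_cast (Nat.choose_pos hnK).ne'
  -- Step 1: the weighted sum against `h` is the subsampled-majority probability `ggAux n m`.
  have hS : ∀ q : ℝ, ∑ l ∈ range (K+1), binomPMF K q l * h l = ggAux n m q := by
    intro q
    have h1 : ∀ l, binomPMF K q l * h l
        = (∑ i ∈ Icc m n, (K.choose l : ℝ) * q^l * (1-q)^(K-l)
            * ((l.choose i : ℝ) * ((K-l).choose (n-i) : ℝ))) / (K.choose n : ℝ) := by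
      intro l
      rw [hh l, binomPMF, ← mul_div_assoc, Finset.mul_sum]
    rw [Finset.sum_congr rfl (fun l _ => h1 l), ← Finset.sum_div, Finset.sum_comm]
    have h2 : ∀ i ∈ Icc m n, ∑ l ∈ range (K+1),
        (K.choose l : ℝ) * q^l * (1-q)^(K-l) * ((l.choose i : ℝ) * ((K-l).choose (n-i) : ℝ))
        = (K.choose n : ℝ) * ((n.choose i : ℝ) * (q^i * (1-q)^(n-i))) := by
      intro i hi
      exact vdm_inner K n i (mem_Icc.mp hi).2 hnK q
    rw [Finset.sum_congr rfl h2, ← Finset.mul_sum]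
    exact mul_div_cancel_left₀ _ hcKn
  -- Step 2: rewrite both sums with a common summand and join them.
  have hγA : ∀ l ∈ range ((K+1)/2), (E * binomPMF K p' l - binomPMF K p l) * γ l
      = (E * binomPMF K p' l - binomPMF K p l)
        + 2*((binomPMF K p l - E * binomPMF K p' l) * h l) := by
    intro l hl
    simp only [mem_range] at hl
    rw [hγlo l (by omega)]
    ring
  have hγB : ∀ l ∈ Icc ((K+1)/2) K, (binomPMF K p l - E * binomPMF K p' l) * γ l
      = (E * binomPMF K p' l - binomPMF K p l)
        + 2*((binomPMF K p l - E * binomPMF K p' l) * h l) := by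
    intro l hl
    rw [hγhi l (mem_Icc.mp hl).1]
    ring
  rw [Finset.sum_congr rfl hγA, Finset.sum_congr rfl hγB]
  have hjoin : ∀ F : ℕ → ℝ, ((∑ l ∈ range ((K+1)/2), F l) + (∑ l ∈ Icc ((K+1)/2) K, F l))
      = ∑ l ∈ range (K+1), F l := by
    intro F
    rw [range_eq_Ico, range_eq_Ico, ← Finset.Ico_add_one_right_eq_Icc]
    exact Finset.sum_Ico_consecutive F (Nat.zero_le _) (by omega)
  rw [hjoin]
  rw [Finset.sum_add_distrib]
  have hA1 : ∑ l ∈ range (K+1), (E * binomPMF K p' l - binomPMF K p l) = E - 1 := by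
    rw [Finset.sum_sub_distrib, ← Finset.mul_sum, binom_sum, binom_sum, mul_one]
  have hA2 : ∑ l ∈ range (K+1), 2*((binomPMF K p l - E * binomPMF K p' l) * h l)
      = 2 * (ggAux n m p - E * ggAux n m p') := by
    rw [← Finset.mul_sum]
    congr 1
    have hsplit : ∀ l, (binomPMF K p l - E * binomPMF K p' l) * h l
        = binomPMF K p l * h l - E * (binomPMF K p' l * h l) := fun l => by ring
    rw [Finset.sum_congr rfl (fun l _ => hsplit l), Finset.sum_sub_distrib,
      ← Finset.mul_sum, hS p, hS p']
  rw [hA1, hA2]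
  have hkey := gg_key m hm1 ε p p' hε hp0 hp1 hp'0 hp'1 hpe
  rw [← hn, ← hE] at hkey
  linarith
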